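/- Total expected regret bound for UCB in MDPs: under the hypotheses of the regret decomposition and the UCB count bound, with Tₖ = T₀ + c·k and c > 0, the expected regret after n iterations satisfies E[r(n)] ≤ Σ_{e ≠ e*} (32 log n/(Δₑ − 2Kₑ/Tₙ)² + 1 + π²/3)·(Δₑ + Kₑ/T₀) + (K_{e*}/c)·log((T₀ + cn − c)/T₀) + K_{e*}/T₀, hence E[r(n)] = O(log n). -/

import Mathlib

open MeasureTheory Finset

/-- Total expected regret bound for UCB in MDPs: combining the regret
decomposition, the UCB count bound `E[Tₑ(n)] ≤ 32 log n/(Δₑ − 2Kₑ/Tₙ)² + 1 + π²/3`,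
and the harmonic-sum bound for linearly growing horizons `Tₖ = T₀ + c·k`,
the expected regret after `n` iterations is `O(log n)`. -/
theorem stmt_19 {Ω : Type*} {m0 : MeasurableSpace Ω} {μ : Measure Ω}
    [IsProbabilityMeasure μ]
    {E : Type*} [Fintype E] [DecidableEq E]
    [MeasurableSpace E] [MeasurableSingletonClass E]
    (𝓕 : Filtration ℕ m0)
    (Rbar K : E → ℝ) (hK : ∀ e', 0 ≤ K e')
    (estar : E) (hstar : ∀ e', Rbar e' ≤ Rbar estar)
    (T₀ c : ℝ) (hT₀ : 1 ≤ T₀) (hc : 0 < c)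
    (T : ℕ → ℝ) (hTdef : ∀ k, T k = T₀ + c * k)
    (e : ℕ → Ω → E) (he : ∀ m, Measurable[𝓕 m] (e m))
    (X : ℕ → Ω → ℝ) (hXmeas : ∀ m, StronglyMeasurable[𝓕 (m + 1)] (X m))
    (hX01 : ∀ m, ∀ᵐ ω ∂μ, X m ω ∈ Set.Icc (0 : ℝ) 1)
    (hbias : ∀ m, ∀ᵐ ω ∂μ,
      (μ[fun ω' => Rbar (e m ω') - X m ω' | 𝓕 m]) ω ≤ K (e m ω) / T m)
    (n : ℕ) (hn : 1 ≤ n)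
    (hgap : ∀ e', e' ≠ estar → Rbar estar - Rbar e' > 2 * K e' / T₀)
    (hcount : ∀ e', e' ≠ estar →
      (∫ ω, (((Finset.range n).filter (fun m => e m ω = e')).card : ℝ) ∂μ) ≤
        32 * Real.log n / ((Rbar estar - Rbar e') - 2 * K e' / T n) ^ 2 +
          1 + Real.pi ^ 2 / 3) :
    (∫ ω, ((n : ℝ) * Rbar estar - ∑ m ∈ Finset.range n, X m ω) ∂μ) ≤
      (∑ e' ∈ Finset.univ.filter (fun e' => e' ≠ estar),
        (32 * Real.log n / ((Rbar estar - Rbar e') - 2 * K e' / T n) ^ 2 +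
            1 + Real.pi ^ 2 / 3) *
          ((Rbar estar - Rbar e') + K e' / T₀)) +
      (K estar / c) * Real.log ((T₀ + c * n - c) / T₀) + K estar / T₀ := by
  classical
  have hT₀pos : (0:ℝ) < T₀ := lt_of_lt_of_le one_pos hT₀
  have hTge : ∀ m : ℕ, T₀ ≤ T m := by
    intro m
    rw [hTdef]
    have : (0:ℝ) ≤ c * m := by positivity
    linarith
  have hTpos : ∀ m : ℕ, 0 < T m := fun m => lt_of_lt_of_le hT₀pos (hTge m)
  -- integrability of compositions with the expert process
  have hintE : ∀ (f : E → ℝ) (m : ℕ), Integrable (fun ω => f (e m ω)) μ := by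
    intro f m
    have hmeas : Measurable fun ω => f (e m ω) :=
      (measurable_of_countable f).comp ((he m).mono (𝓕.le m) le_rfl)
    have hne : (Finset.univ : Finset E).Nonempty := ⟨estar, mem_univ _⟩
    refine (integrable_const (Finset.univ.sup' hne fun e' => |f e'|)).mono'
      hmeas.aestronglyMeasurable ?_
    filter_upwards with ω
    simpa only [Real.norm_eq_abs] using Finset.le_sup' (fun e' => |f e'|) (mem_univ (e m ω))
  have hXint : ∀ m, Integrable (X m) μ := by
    intro m
    refine (integrable_const (1:ℝ)).mono'
      ((hXmeas m).mono (𝓕.le (m+1))).aestronglyMeasurable ?_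
    filter_upwards [hX01 m] with ω hω
    rw [Real.norm_eq_abs, abs_le]
    exact ⟨le_trans (by norm_num) hω.1, hω.2⟩
  -- per-iteration bound via conditional expectation
  have step : ∀ m, (∫ ω, (Rbar estar - X m ω) ∂μ) ≤
      ∫ ω, ((Rbar estar - Rbar (e m ω)) + K (e m ω) / T m) ∂μ := by
    intro m
    have hint1 : Integrable (fun ω => Rbar estar - Rbar (e m ω)) μ :=
      hintE (fun e' => Rbar estar - Rbar e') m
    have hint2 : Integrable (fun ω => Rbar (e m ω) - X m ω) μ :=
      (hintE Rbar m).sub (hXint m)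
    have hint3 : Integrable (fun ω => K (e m ω) / T m) μ :=
      hintE (fun e' => K e' / T m) m
    have h2 : (∫ ω, (Rbar (e m ω) - X m ω) ∂μ) ≤ ∫ ω, K (e m ω) / T m ∂μ := by
      rw [← integral_condExp (𝓕.le m) (f := fun ω => Rbar (e m ω) - X m ω)]
      exact integral_mono_ae integrable_condExp hint3 (hbias m)
    calc ∫ ω, (Rbar estar - X m ω) ∂μ
        = ∫ ω, ((Rbar estar - Rbar (e m ω)) + (Rbar (e m ω) - X m ω)) ∂μ := by
          congr 1; funext ω; ring
      _ = (∫ ω, (Rbar estar - Rbar (e m ω)) ∂μ) + ∫ ω, (Rbar (e m ω) - X m ω) ∂μ :=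
          integral_add hint1 hint2
      _ ≤ (∫ ω, (Rbar estar - Rbar (e m ω)) ∂μ) + ∫ ω, K (e m ω) / T m ∂μ := by linarith
      _ = _ := (integral_add hint1 hint3).symm
  -- counts as sums of indicators
  have hcnt_eq : ∀ (e' : E) (ω : Ω),
      (((Finset.range n).filter (fun m => e m ω = e')).card : ℝ) =
        ∑ m ∈ Finset.range n, (fun x => if x = e' then (1:ℝ) else 0) (e m ω) := by
    intro e' ω
    rw [Finset.card_filter]
    push_cast
    rfl
  have hcnt_int : ∀ e' : E,
      Integrable (fun ω => (((Finset.range n).filter (fun m => e m ω = e')).card : ℝ)) μ := by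
    intro e'
    simp only [hcnt_eq]
    exact integrable_finset_sum _ (fun m _ => hintE (fun x => if x = e' then (1:ℝ) else 0) m)
  have hG_int : Integrable
      (fun ω => ∑ m ∈ Finset.range n, ((Rbar estar - Rbar (e m ω)) + K (e m ω) / T m)) μ :=
    integrable_finset_sum _ (fun m _ => hintE (fun e' => (Rbar estar - Rbar e') + K e' / T m) m)
  -- pointwise fiberwise bound
  have hpoint : ∀ ω : Ω,
      (∑ m ∈ Finset.range n, ((Rbar estar - Rbar (e m ω)) + K (e m ω) / T m)) ≤
      K estar * (∑ m ∈ Finset.range n, 1 / T m) +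
        ∑ e' ∈ Finset.univ.filter (fun e' => e' ≠ estar),
          (((Finset.range n).filter (fun m => e m ω = e')).card : ℝ) *
            ((Rbar estar - Rbar e') + K e' / T₀) := by
    intro ω
    rw [← Finset.sum_fiberwise (Finset.range n) (fun m => e m ω)
      (fun m => (Rbar estar - Rbar (e m ω)) + K (e m ω) / T m)]
    rw [← Finset.add_sum_erase _ _ (Finset.mem_univ estar), ← Finset.filter_ne']
    refine add_le_add ?_ (Finset.sum_le_sum ?_)
    · calc (∑ m ∈ (Finset.range n).filter (fun m => e m ω = estar),
            ((Rbar estar - Rbar (e m ω)) + K (e m ω) / T m))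
          = ∑ m ∈ (Finset.range n).filter (fun m => e m ω = estar), K estar * (1 / T m) := by
            refine Finset.sum_congr rfl fun m hm => ?_
            obtain ⟨-, h⟩ := Finset.mem_filter.mp hm
            rw [h]
            ring
        _ ≤ ∑ m ∈ Finset.range n, K estar * (1 / T m) := by
            refine Finset.sum_le_sum_of_subset_of_nonneg (Finset.filter_subset _ _)
              fun m _ _ => ?_
            have h1 := hTpos m
            have h2 := hK estar
            positivity
        _ = K estar * (∑ m ∈ Finset.range n, 1 / T m) := by rw [Finset.mul_sum]
    · intro e' he'
      calc (∑ m ∈ (Finset.range n).filter (fun m => e m ω = e'),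
            ((Rbar estar - Rbar (e m ω)) + K (e m ω) / T m))
          ≤ ∑ m ∈ (Finset.range n).filter (fun m => e m ω = e'),
              ((Rbar estar - Rbar e') + K e' / T₀) := by
            refine Finset.sum_le_sum fun m hm => ?_
            obtain ⟨-, h⟩ := Finset.mem_filter.mp hm
            rw [h]
            have h1 : K e' / T m ≤ K e' / T₀ := by
              apply div_le_div_of_nonneg_left (hK e') hT₀pos (hTge m)
            linarith
        _ = _ := by rw [Finset.sum_const, nsmul_eq_mul]
  -- integrate the pointwise bound
  have hRint : Integrable (fun ω =>
      K estar * (∑ m ∈ Finset.range n, 1 / T m) +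
        ∑ e' ∈ Finset.univ.filter (fun e' => e' ≠ estar),
          (((Finset.range n).filter (fun m => e m ω = e')).card : ℝ) *
            ((Rbar estar - Rbar e') + K e' / T₀)) μ :=
    (integrable_const _).add
      (integrable_finset_sum _ fun e' _ => (hcnt_int e').mul_const _)
  have hmain : (∫ ω, (∑ m ∈ Finset.range n,
        ((Rbar estar - Rbar (e m ω)) + K (e m ω) / T m)) ∂μ) ≤
      K estar * (∑ m ∈ Finset.range n, 1 / T m) +
        ∑ e' ∈ Finset.univ.filter (fun e' => e' ≠ estar),
          (∫ ω, (((Finset.range n).filter (fun m => e m ω = e')).card : ℝ) ∂μ) *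
            ((Rbar estar - Rbar e') + K e' / T₀) := by
    calc (∫ ω, (∑ m ∈ Finset.range n,
          ((Rbar estar - Rbar (e m ω)) + K (e m ω) / T m)) ∂μ)
        ≤ ∫ ω, (K estar * (∑ m ∈ Finset.range n, 1 / T m) +
            ∑ e' ∈ Finset.univ.filter (fun e' => e' ≠ estar),
              (((Finset.range n).filter (fun m => e m ω = e')).card : ℝ) *
                ((Rbar estar - Rbar e') + K e' / T₀)) ∂μ :=
          integral_mono hG_int hRint hpoint
      _ = _ := by
          rw [integral_add (integrable_const _)
            (integrable_finset_sum _ fun e' _ => (hcnt_int e').mul_const _),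
            integral_const,
            integral_finset_sum _ (fun e' _ => (hcnt_int e').mul_const _)]
          simp only [measure_univ, ENNReal.toReal_one, probReal_univ, smul_eq_mul, one_mul]
          congr 1
          refine Finset.sum_congr rfl fun e' _ => ?_
          exact integral_mul_const _ _
  -- apply the UCB count bound
  have hsum_count :
      (∑ e' ∈ Finset.univ.filter (fun e' => e' ≠ estar),
        (∫ ω, (((Finset.range n).filter (fun m => e m ω = e')).card : ℝ) ∂μ) *
          ((Rbar estar - Rbar e') + K e' / T₀)) ≤
      ∑ e' ∈ Finset.univ.filter (fun e' => e' ≠ estar),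
        (32 * Real.log n / ((Rbar estar - Rbar e') - 2 * K e' / T n) ^ 2 +
            1 + Real.pi ^ 2 / 3) *
          ((Rbar estar - Rbar e') + K e' / T₀) := by
    refine Finset.sum_le_sum fun e' he' => ?_
    have hne : e' ≠ estar := (Finset.mem_filter.mp he').2
    have ha : 0 ≤ (Rbar estar - Rbar e') + K e' / T₀ := by
      have h1 : 0 ≤ Rbar estar - Rbar e' := sub_nonneg.mpr (hstar e')
      have h2 : 0 ≤ K e' / T₀ := div_nonneg (hK e') hT₀pos.le
      linarith
    exact mul_le_mul_of_nonneg_right (hcount e' hne) ha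
  -- harmonic sum bound
  have hHle : (∑ m ∈ Finset.range n, 1 / T m) ≤
      1 / c * Real.log ((T₀ + c * n - c) / T₀) + 1 / T₀ := by
    obtain ⟨p, rfl⟩ : ∃ p, n = p + 1 := ⟨n - 1, (Nat.succ_pred_eq_of_pos hn).symm⟩
    have hb : ∀ i : ℕ, (0:ℝ) < T₀ + c * i := by
      intro i
      have : (0:ℝ) ≤ c * i := by positivity
      linarith
    rw [Finset.sum_range_succ']
    have h0 : 1 / T 0 = 1 / T₀ := by rw [hTdef]; norm_num
    have hstep : ∀ i ∈ Finset.range p, 1 / T (i + 1) ≤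
        1 / c * (Real.log (T₀ + c * ((i+1 : ℕ) : ℝ)) - Real.log (T₀ + c * (i : ℝ))) := by
      intro i _
      have hai := hb i
      have hbi := hb (i + 1)
      have hlog : Real.log ((T₀ + c * (i:ℝ)) / (T₀ + c * ((i+1:ℕ):ℝ))) ≤
          (T₀ + c * (i:ℝ)) / (T₀ + c * ((i+1:ℕ):ℝ)) - 1 :=
        Real.log_le_sub_one_of_pos (div_pos hai hbi)
      rw [Real.log_div hai.ne' hbi.ne'] at hlog
      have hfrac : 1 - (T₀ + c * (i:ℝ)) / (T₀ + c * ((i+1:ℕ):ℝ)) =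
          c / (T₀ + c * ((i+1:ℕ):ℝ)) := by
        rw [eq_div_iff hbi.ne', sub_mul, div_mul_cancel₀ _ hbi.ne']
        push_cast
        ring
      have key : c / (T₀ + c * ((i+1:ℕ):ℝ)) ≤
          Real.log (T₀ + c * ((i+1:ℕ):ℝ)) - Real.log (T₀ + c * (i:ℝ)) := by
        linarith
      rw [hTdef]
      calc 1 / (T₀ + c * ((i+1:ℕ):ℝ)) = 1 / c * (c / (T₀ + c * ((i+1:ℕ):ℝ))) := by
            field_simp
        _ ≤ _ := mul_le_mul_of_nonneg_left key (by positivity)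
    have htel : (∑ i ∈ Finset.range p,
        1 / c * (Real.log (T₀ + c * ((i+1 : ℕ) : ℝ)) - Real.log (T₀ + c * (i : ℝ)))) =
        1 / c * (Real.log (T₀ + c * (p : ℝ)) - Real.log T₀) := by
      rw [← Finset.mul_sum]
      congr 1
      have := Finset.sum_range_sub (fun i : ℕ => Real.log (T₀ + c * (i : ℝ))) p
      simpa using this
    have hlogeq : Real.log (T₀ + c * (p : ℝ)) - Real.log T₀ =
        Real.log ((T₀ + c * ((p+1 : ℕ) : ℝ) - c) / T₀) := by
      rw [Real.log_div (by push_cast; linarith [hb p]) hT₀pos.ne']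
      push_cast
      ring_nf
    calc (∑ i ∈ Finset.range p, 1 / T (i + 1)) + 1 / T 0
        ≤ (∑ i ∈ Finset.range p,
            1 / c * (Real.log (T₀ + c * ((i+1 : ℕ) : ℝ)) - Real.log (T₀ + c * (i : ℝ)))) +
            1 / T₀ := by
          rw [h0]
          exact add_le_add_left (Finset.sum_le_sum hstep) _
      _ = 1 / c * Real.log ((T₀ + c * ((p+1 : ℕ) : ℝ) - c) / T₀) + 1 / T₀ := by
          rw [htel, hlogeq]
  -- assemble everything
  have hsplit : (∫ ω, ((n : ℝ) * Rbar estar - ∑ m ∈ Finset.range n, X m ω) ∂μ)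
      = ∑ m ∈ Finset.range n, ∫ ω, (Rbar estar - X m ω) ∂μ := by
    have h1 : (∫ ω, (∑ m ∈ Finset.range n, (Rbar estar - X m ω)) ∂μ)
        = ∑ m ∈ Finset.range n, ∫ ω, (Rbar estar - X m ω) ∂μ :=
      integral_finset_sum _ (fun m _ => (integrable_const (Rbar estar)).sub (hXint m))
    rw [← h1]
    congr 1
    funext ω
    rw [Finset.sum_sub_distrib, Finset.sum_const, Finset.card_range, nsmul_eq_mul]
  have hstar_mul : K estar * (∑ m ∈ Finset.range n, 1 / T m) ≤
      K estar / c * Real.log ((T₀ + c * n - c) / T₀) + K estar / T₀ := by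
    have := mul_le_mul_of_nonneg_left hHle (hK estar)
    calc K estar * (∑ m ∈ Finset.range n, 1 / T m)
        ≤ K estar * (1 / c * Real.log ((T₀ + c * n - c) / T₀) + 1 / T₀) := this
      _ = K estar / c * Real.log ((T₀ + c * n - c) / T₀) + K estar / T₀ := by ring
  calc (∫ ω, ((n : ℝ) * Rbar estar - ∑ m ∈ Finset.range n, X m ω) ∂μ)
      = ∑ m ∈ Finset.range n, ∫ ω, (Rbar estar - X m ω) ∂μ := hsplit
    _ ≤ ∑ m ∈ Finset.range n,
        ∫ ω, ((Rbar estar - Rbar (e m ω)) + K (e m ω) / T m) ∂μ :=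
        Finset.sum_le_sum fun m _ => step m
    _ = ∫ ω, (∑ m ∈ Finset.range n,
        ((Rbar estar - Rbar (e m ω)) + K (e m ω) / T m)) ∂μ :=
        (integral_finset_sum _ (fun m _ =>
          hintE (fun e' => (Rbar estar - Rbar e') + K e' / T m) m)).symm
    _ ≤ K estar * (∑ m ∈ Finset.range n, 1 / T m) +
        ∑ e' ∈ Finset.univ.filter (fun e' => e' ≠ estar),
          (∫ ω, (((Finset.range n).filter (fun m => e m ω = e')).card : ℝ) ∂μ) *
            ((Rbar estar - Rbar e') + K e' / T₀) := hmain
    _ ≤ K estar * (∑ m ∈ Finset.range n, 1 / T m) +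
        ∑ e' ∈ Finset.univ.filter (fun e' => e' ≠ estar),
          (32 * Real.log n / ((Rbar estar - Rbar e') - 2 * K e' / T n) ^ 2 +
              1 + Real.pi ^ 2 / 3) *
            ((Rbar estar - Rbar e') + K e' / T₀) := add_le_add_right hsum_count _
    _ ≤ _ := by linarith [hstar_mul]
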